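/- In the two-sided model with one-sided ties, if a matching M satisfies the three no-(1,0)-edge conditions and M' is any matching, then for every connected component ρ of the symmetric difference M ⊕ M' that is a cycle, the sum over vertices u ∈ ρ of vote_u(M'(u), M(u)) is at most 0. -/

import Mathlib

/-- A matching in a bipartite graph `G = (A ∪ B, E)`. -/
structure BMatching (A B : Type*) (E : A → B → Prop) where
  mA : A → Option B
  mB : B → Option A
  consistent : ∀ a b, mA a = some b ↔ mB b = some a
  valid : ∀ a b, mA a = some b → E a b

/-- Vote of a vertex with strict rank-based preferences (lower rank = better);
being unmatched is worst. -/
def voteRank {Y : Type*} (r : Y → ℕ) : Option Y → Option Y → ℤ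
  | some y, some y' => if r y < r y' then 1 else if r y' < r y then -1 else 0
  | some _, none => 1
  | none, some _ => -1
  | none, none => 0

/-- Vote of a vertex that is indifferent among all its neighbours and only
prefers being matched to being unmatched (a `B`-vertex with one big tie). -/
def voteSat {Y : Type*} : Option Y → Option Y → ℤ
  | some _, none => 1
  | none, some _ => -1
  | _, _ => 0

variable {A B : Type*}

/-- Popularity margin in the two-sided model with one-sided ties:
`A`-vertices vote by their strict preferences, `B`-vertices by saturation. -/
def deltaTS [Fintype A] [Fintype B] {E : A → B → Prop} (rank : A → B → ℕ)
    (M N : BMatching A B E) : ℤ :=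
  (∑ a, voteRank (rank a) (M.mA a) (N.mA a)) + (∑ b, voteSat (M.mB b) (N.mB b))

/-- `M` is popular in the two-sided model with one-sided ties. -/
def PopularTS [Fintype A] [Fintype B] {E : A → B → Prop} (rank : A → B → ℕ)
    (M : BMatching A B E) : Prop :=
  ∀ N : BMatching A B E, 0 ≤ deltaTS rank M N

/-- Adjacency of vertices of `A ⊕ B` in the bipartite graph. -/
def adjV (E : A → B → Prop) : A ⊕ B → A ⊕ B → Prop
  | .inl a, .inr b => E a b
  | .inr b, .inl a => E a b
  | _, _ => False

/-- The pair of vertices forms an edge of the matching `M`. -/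
def inM {E : A → B → Prop} (M : BMatching A B E) : A ⊕ B → A ⊕ B → Prop
  | .inl a, .inr b => M.mA a = some b
  | .inr b, .inl a => M.mA a = some b
  | _, _ => False

/-- A vertex of `A ⊕ B` is matched by `M`. -/
def matchedV {E : A → B → Prop} (M : BMatching A B E) : A ⊕ B → Prop
  | .inl a => (M.mA a).isSome
  | .inr b => (M.mB b).isSome

/-- The list of vertices forms a walk in `G` whose edges alternately belong to
`M`; the flag records whether the next edge must be in `M`. -/
def alternates (E : A → B → Prop) (M : BMatching A B E) :
    Bool → List (A ⊕ B) → Prop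
  | _, [] => True
  | _, [_] => True
  | flag, x :: y :: rest =>
      adjV E x y ∧ (inM M x y ↔ flag = true) ∧ alternates E M (!flag) (y :: rest)

/-- An alternating path with respect to `M`: a simple walk whose edges
alternate between non-matching and matching edges (in either phase). -/
def IsAltPath (E : A → B → Prop) (M : BMatching A B E) (l : List (A ⊕ B)) : Prop :=
  l.Nodup ∧ (alternates E M true l ∨ alternates E M false l)

/-- An alternating cycle with respect to `M`: the closed walk obtained by
returning to the first vertex alternates, the vertices are distinct, and the
number of edges is even. -/
def IsAltCycle (E : A → B → Prop) (M : BMatching A B E) (l : List (A ⊕ B)) : Prop :=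
  match l with
  | [] => False
  | x :: xs => (x :: xs).Nodup ∧ 2 ≤ (x :: xs).length ∧
      Even (x :: xs).length ∧ alternates E M true ((x :: xs) ++ [x])

/-- The edge `{a, b}` is a `(1,0)` edge with respect to `M`: it is not in `M`,
`a` strictly prefers `b` to its `M`-partner (`α = 1`), and `b` is matched by
`M` (so `b` is indifferent, `β = 0`). -/
def isOneZero (E : A → B → Prop) (rank : A → B → ℕ) (M : BMatching A B E)
    (a : A) (b : B) : Prop :=
  E a b ∧ M.mA a ≠ some b ∧
    voteRank (rank a) (some b) (M.mA a) = 1 ∧ (M.mB b).isSome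

/-- The unordered pair `{x, y}` of vertices of `A ⊕ B` is a `(1,0)` edge. -/
def isOneZeroPair (E : A → B → Prop) (rank : A → B → ℕ) (M : BMatching A B E) :
    A ⊕ B → A ⊕ B → Prop
  | .inl a, .inr b => isOneZero E rank M a b
  | .inr b, .inl a => isOneZero E rank M a b
  | _, _ => False

/-- `l` contains `u, v` as consecutive vertices (an edge of the walk `l`). -/
def hasEdge {V : Type*} (l : List V) (u v : V) : Prop :=
  ∃ l₁ l₂, l = l₁ ++ u :: v :: l₂

/-- The walk `l` contains a `(1,0)` edge. -/
def hasOneZero (E : A → B → Prop) (rank : A → B → ℕ) (M : BMatching A B E)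
    (l : List (A ⊕ B)) : Prop :=
  ∃ x y, hasEdge l x y ∧ isOneZeroPair E rank M x y

/-- The walk `l` contains two or more (distinct occurrences of) `(1,0)` edges. -/
def hasTwoOneZero (E : A → B → Prop) (rank : A → B → ℕ) (M : BMatching A B E)
    (l : List (A ⊕ B)) : Prop :=
  ∃ l₁ l₂ l₃ x y x' y',
    l = l₁ ++ x :: y :: l₂ ++ x' :: y' :: l₃ ∧
    isOneZeroPair E rank M x y ∧ isOneZeroPair E rank M x' y'

/-- Vote of a vertex of `A ⊕ B` comparing its partners in `M'` and `M`. -/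
def voteV {E : A → B → Prop} (rank : A → B → ℕ)
    (M' M : BMatching A B E) : A ⊕ B → ℤ
  | .inl a => voteRank (rank a) (M'.mA a) (M.mA a)
  | .inr b => voteSat (M'.mB b) (M.mB b)

section CCVNAux

variable {A B : Type*} {E : A → B → Prop}

lemma inM_symm' (M : BMatching A B E) {u v : A ⊕ B} (h : inM M u v) : inM M v u := by
  cases u <;> cases v <;> simp_all [inM]

lemma alt_get' (M : BMatching A B E) :
    ∀ (w : List (A ⊕ B)) (f : Bool) (i : ℕ) (h : i + 1 < w.length),
      alternates E M f w →
      (inM M (w[i]'(by omega)) (w[i+1]'h) ↔ (if i % 2 = 0 then f else !f) = true) := by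
  intro w
  induction w with
  | nil => intro f i h; simp at h
  | cons a t ih =>
    intro f i h halt
    cases t with
    | nil => simp at h
    | cons b r =>
      obtain ⟨hadj, hiff, hrest⟩ := halt
      cases i with
      | zero => simpa using hiff
      | succ k =>
        have hk : k + 1 < (b :: r).length := by simpa using h
        have := ih (!f) k hk hrest
        simp only [List.getElem_cons_succ] at this ⊢
        rw [this]
        rcases Nat.mod_two_eq_zero_or_one k with h0 | h0
        · have h1 : (k + 1) % 2 = 1 := by omega
          simp [h0, h1]
        · have h1 : (k + 1) % 2 = 0 := by omega
          simp [h0, h1]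

lemma hasEdge_of_get' {V : Type*} (w : List V) (i : ℕ) (h : i + 1 < w.length) :
    hasEdge w (w[i]'(by omega)) (w[i+1]'h) := by
  refine ⟨w.take i, w.drop (i+2), ?_⟩
  conv_lhs => rw [← List.take_append_drop i w]
  congr 1
  rw [List.drop_eq_getElem_cons (by omega), List.drop_eq_getElem_cons (by omega)]

end CCVNAux

/-- If `M` satisfies the three no-`(1,0)`-edge conditions and `M'` is any
matching, then every connected component of `M ⊕ M'` that is a cycle (an
alternating cycle whose edges alternate between `M \ M'` and `M' \ M`)
contributes a vertex-vote total of at most `0`. -/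
theorem cycle_component_vote_nonpos
    [Fintype A] [Fintype B] (E : A → B → Prop) (rank : A → B → ℕ)
    (hstrict : ∀ a, Function.Injective (rank a))
    (M : BMatching A B E)
    (hcyc : ∀ l x xs, l = x :: xs → IsAltCycle E M l →
      ¬ hasOneZero E rank M (l ++ [x]))
    (hpathfree : ∀ l x xs, l = x :: xs → IsAltPath E M l →
      ¬ matchedV M x → ¬ hasOneZero E rank M l)
    (hpathtwo : ∀ l, IsAltPath E M l → ¬ hasTwoOneZero E rank M l)
    (M' : BMatching A B E)
    (l : List (A ⊕ B)) (x : A ⊕ B) (xs : List (A ⊕ B)) (hl : l = x :: xs)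
    (hc : IsAltCycle E M l)
    (hsymmdiff : (l ++ [x]).Chain' (fun u v =>
      (inM M u v → ¬ inM M' u v) ∧ (¬ inM M u v → inM M' u v))) :
    (l.map (voteV rank M' M)).sum ≤ 0 := by
  subst hl
  have hc' := hc
  obtain ⟨hnd, hn2, hev, halt⟩ := hc
  set n := (x :: xs).length with hn
  have hwlen : ((x :: xs) ++ [x]).length = n + 1 := by simp [hn]
  -- edge parity facts
  have edgeM : ∀ (i : ℕ) (h : i + 1 < ((x :: xs) ++ [x]).length),
      (inM M (((x :: xs) ++ [x])[i]'(by omega)) (((x :: xs) ++ [x])[i+1]'h) ↔ i % 2 = 0) := by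
    intro i h
    have := alt_get' M _ true i h halt
    rcases Nat.mod_two_eq_zero_or_one i with h0 | h0
    · simpa [h0] using this
    · simp [h0] at this ⊢
      exact this
  have edgeM' : ∀ (i : ℕ) (h : i + 1 < ((x :: xs) ++ [x]).length), i % 2 = 1 →
      inM M' (((x :: xs) ++ [x])[i]'(by omega)) (((x :: xs) ++ [x])[i+1]'h) := by
    intro i h hodd
    have hnot : ¬ inM M (((x :: xs) ++ [x])[i]'(by omega)) (((x :: xs) ++ [x])[i+1]'h) := by
      rw [edgeM i h]; omega
    have hch := List.isChain_iff_getElem.mp hsymmdiff i (by rw [hwlen] at h ⊢; omega)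
    have hch := hch
    exact hch.2 hnot
  have getw : ∀ (i : ℕ) (h : i < n),
      ((x :: xs) ++ [x])[i]'(by omega) = (x :: xs)[i]'h := by
    intro i h
    exact List.getElem_append_left h
  have getlast : ((x :: xs) ++ [x])[n]'(by omega) = x :=
    List.getElem_concat_length hn _
  -- key claim: every vertex on the cycle has an incident M-edge and an incident
  -- M'-edge appearing consecutively in the closed walk
  have key : ∀ u ∈ x :: xs, ∃ v v', inM M u v ∧ inM M' u v' ∧
      (hasEdge ((x :: xs) ++ [x]) u v' ∨ hasEdge ((x :: xs) ++ [x]) v' u) := by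
    intro u hu
    obtain ⟨j, hj, hju⟩ := List.mem_iff_getElem.mp hu
    rcases Nat.eq_zero_or_pos j with rfl | hjpos
    · -- u = x, use edge 0 (in M) and the last edge (in M')
      have hux : x = u := hju
      subst hux
      have h01 : 0 + 1 < ((x :: xs) ++ [x]).length := by omega
      have hM0 := (edgeM 0 h01).mpr (by norm_num)
      have h0 : ((x :: xs) ++ [x])[0]'(by omega) = x := rfl
      rw [h0] at hM0
      have hn1 : (n - 1) + 1 < ((x :: xs) ++ [x]).length := by omega
      have hodd : (n - 1) % 2 = 1 := by
        obtain ⟨m, hm⟩ := hev; omega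
      have hM'last := edgeM' (n - 1) hn1 hodd
      have hE := hasEdge_of_get' ((x :: xs) ++ [x]) (n - 1) hn1
      have hidx : n - 1 + 1 = n := by omega
      simp only [hidx] at hM'last hE
      rw [getlast] at hM'last hE
      exact ⟨_, _, hM0, inM_symm' M' hM'last, Or.inr hE⟩
    · -- interior occurrence: edges j-1 and j
      have hj1 : (j - 1) + 1 < ((x :: xs) ++ [x]).length := by omega
      have hjj : j + 1 < ((x :: xs) ++ [x]).length := by omega
      have hidx : j - 1 + 1 = j := by omega
      have hwj : ((x :: xs) ++ [x])[j]'(by omega) = u := by rw [getw j hj, hju]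
      rcases Nat.mod_two_eq_zero_or_one j with hp | hp
      · -- j even: M-edge is (j, j+1), M'-edge is (j-1, j)
        have hMe := (edgeM j hjj).mpr hp
        rw [hwj] at hMe
        have hM'e := edgeM' (j - 1) hj1 (by omega)
        have hE := hasEdge_of_get' ((x :: xs) ++ [x]) (j - 1) hj1
        simp only [hidx] at hM'e hE
        rw [hwj] at hM'e hE
        exact ⟨_, _, hMe, inM_symm' M' hM'e, Or.inr hE⟩
      · -- j odd: M-edge is (j-1, j), M'-edge is (j, j+1)
        have hMe := (edgeM (j - 1) hj1).mpr (by omega)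
        simp only [hidx] at hMe
        rw [hwj] at hMe
        have hM'e := edgeM' j hjj hp
        rw [hwj] at hM'e
        have hE := hasEdge_of_get' ((x :: xs) ++ [x]) j hjj
        rw [hwj] at hE
        exact ⟨_, _, inM_symm' M hMe, hM'e, Or.inl hE⟩
  -- membership transfer from the closed walk back to the cycle
  have memw : ∀ z : A ⊕ B, z ∈ (x :: xs) ++ [x] → z ∈ x :: xs := by
    intro z hz
    rcases List.mem_append.mp hz with h | h
    · exact h
    · simp at h; simp [h]
  -- each vertex votes ≤ 0
  have hvert : ∀ u ∈ x :: xs, voteV rank M' M u ≤ 0 := by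
    intro u hu
    obtain ⟨v, v', hMv, hM'v', hed⟩ := key u hu
    cases u with
    | inr b =>
      cases v with
      | inr _ => exact absurd hMv (by simp [inM])
      | inl a =>
        have hb : M.mB b = some a := (M.consistent a b).mp hMv
        cases v' with
        | inr _ => exact absurd hM'v' (by simp [inM])
        | inl a' =>
          have hb' : M'.mB b = some a' := (M'.consistent a' b).mp hM'v'
          simp [voteV, hb, hb', voteSat]
    | inl a =>
      cases v with
      | inl _ => exact absurd hMv (by simp [inM])
      | inr b =>
        cases v' with
        | inl _ => exact absurd hM'v' (by simp [inM])
        | inr b' =>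
          have hMa : M.mA a = some b := hMv
          have hM'a : M'.mA a = some b' := hM'v'
          by_cases hlt : rank a b' < rank a b
          · exfalso
            have hv'w : (Sum.inr b' : A ⊕ B) ∈ (x :: xs) ++ [x] := by
              rcases hed with ⟨l1, l2, he⟩ | ⟨l1, l2, he⟩ <;> rw [he] <;> simp
            obtain ⟨v2, v2', hMv2, -, -⟩ := key _ (memw _ hv'w)
            have hb'sat : (M.mB b').isSome := by
              cases v2 with
              | inr _ => exact absurd hMv2 (by simp [inM])
              | inl a2 =>
                rw [(M.consistent a2 b').mp hMv2]; rfl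
            have hone : isOneZero E rank M a b' := by
              refine ⟨M'.valid a b' hM'a, ?_, ?_, hb'sat⟩
              · rw [hMa]
                intro hcon
                have hbb : b = b' := by injection hcon
                rw [hbb] at hlt
                exact lt_irrefl _ hlt
              · simp [voteRank, hMa, hlt]
            apply hcyc (x :: xs) x xs rfl hc'
            rcases hed with hE | hE
            · exact ⟨_, _, hE, hone⟩
            · exact ⟨_, _, hE, hone⟩
          · simp only [voteV, hMa, hM'a, voteRank, if_neg hlt]
            split <;> norm_num
  -- sum over the list
  have hsum : ∀ (t : List (A ⊕ B)), (∀ u ∈ t, voteV rank M' M u ≤ 0) →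
      (t.map (voteV rank M' M)).sum ≤ 0 := by
    intro t
    induction t with
    | nil => simp
    | cons h t ih =>
      intro H
      simp only [List.map_cons, List.sum_cons]
      have h1 := H h (by simp)
      have h2 := ih (fun u hu => H u (by simp [hu]))
      omega
  exact hsum _ hvert
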